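/- arXiv:1402.2358 — 3 statements merged into one kernel-verified Lean document; each statement's English description precedes it below -/
import Mathlib

section
/- The sequence of Cauchy numbers of the second kind {c_n}_{n≥0} is logarithmically convex: c_{n+1}² ≤ c_n c_{n+2} for all n ≥ 0. -/
open MeasureTheory Real Nat

noncomputable def cauchy2 (n : ℕ) : ℝ :=
  ∫ x in (0:ℝ)..1, ∏ i ∈ Finset.range n, (x + i)

private lemma P_cont (k : ℕ) : Continuous (fun x : ℝ => ∏ i ∈ Finset.range k, (x + i)) := by
  fun_prop

private lemma P_nonneg (k : ℕ) {x : ℝ} (hx : 0 ≤ x) :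
    0 ≤ ∏ i ∈ Finset.range k, (x + i) :=
  Finset.prod_nonneg fun i _ => by positivity

private lemma P_bound (k : ℕ) {x : ℝ} (hx : x ∈ Set.Ioc (0:ℝ) 1) :
    ∏ i ∈ Finset.range k, (x + i) ≤ ∏ i ∈ Finset.range k, (1 + i : ℝ) :=
  Finset.prod_le_prod (fun i _ => by have := hx.1; positivity)
    (fun i _ => by have := hx.2; linarith)

private lemma memL2 (k : ℕ) :
    MemLp (fun x : ℝ => Real.sqrt (∏ i ∈ Finset.range k, (x + i)))
      (ENNReal.ofReal 2) (volume.restrict (Set.Ioc (0:ℝ) 1)) := by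
  haveI : IsFiniteMeasure (volume.restrict (Set.Ioc (0:ℝ) 1)) :=
    ⟨by simp [Real.volume_Ioc]⟩
  refine MemLp.of_bound ((Real.continuous_sqrt.comp (P_cont k)).aestronglyMeasurable)
    (Real.sqrt (∏ i ∈ Finset.range k, (1 + i : ℝ))) ?_
  rw [ae_restrict_iff' measurableSet_Ioc]
  filter_upwards with x hx
  rw [Real.norm_eq_abs, abs_of_nonneg (Real.sqrt_nonneg _)]
  exact Real.sqrt_le_sqrt (P_bound k hx)

theorem cauchy2_log_convex (n : ℕ) :
    cauchy2 (n + 1) ^ 2 ≤ cauchy2 n * cauchy2 (n + 2) := by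
  set μ := volume.restrict (Set.Ioc (0:ℝ) 1) with hμ
  have hconv : ∀ k, cauchy2 k = ∫ x, (∏ i ∈ Finset.range k, (x + i)) ∂μ := by
    intro k
    rw [cauchy2, intervalIntegral.integral_of_le zero_le_one, hμ]
  set f : ℝ → ℝ := fun x => Real.sqrt (∏ i ∈ Finset.range n, (x + i)) with hf
  set g : ℝ → ℝ := fun x => Real.sqrt (∏ i ∈ Finset.range (n + 2), (x + i)) with hg
  have hint : ∀ k, IntegrableOn (fun x : ℝ => ∏ i ∈ Finset.range k, (x + i))
      (Set.Ioc (0:ℝ) 1) := fun k => (P_cont k).integrableOn_Ioc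
  have hintfg : IntegrableOn (fun x => f x * g x) (Set.Ioc (0:ℝ) 1) :=
    ((Real.continuous_sqrt.comp (P_cont n)).mul
      (Real.continuous_sqrt.comp (P_cont (n + 2)))).integrableOn_Ioc
  -- Step 1: pointwise bound P_{n+1} ≤ f * g on Ioc 0 1
  have step1 : cauchy2 (n + 1) ≤ ∫ x, f x * g x ∂μ := by
    rw [hconv]
    refine setIntegral_mono_on (hint (n + 1)) hintfg measurableSet_Ioc ?_
    intro x hx
    have hx0 : (0:ℝ) ≤ x := hx.1.le
    have h1 : f x * g x = Real.sqrt ((∏ i ∈ Finset.range n, (x + i)) *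
        ∏ i ∈ Finset.range (n + 2), (x + i)) := (Real.sqrt_mul (P_nonneg n hx0) _).symm
    rw [h1]
    refine Real.le_sqrt_of_sq_le ?_
    have e1 : ∏ i ∈ Finset.range (n + 1), (x + i) =
        (∏ i ∈ Finset.range n, (x + i)) * (x + n) := by
      rw [Finset.prod_range_succ]
    have e2 : ∏ i ∈ Finset.range (n + 2), (x + i) =
        (∏ i ∈ Finset.range n, (x + i)) * (x + n) * (x + n + 1) := by
      rw [Finset.prod_range_succ, Finset.prod_range_succ]
      push_cast
      ring
    have hPn := P_nonneg n hx0
    rw [e1, e2]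
    nlinarith [mul_nonneg hPn (by positivity : (0:ℝ) ≤ x + n)]
  have h2 : Real.HolderConjugate 2 2 := Real.HolderConjugate.two_two
  have hfg0 : (0:ℝ→ℝ) ≤ᵐ[μ] f := Filter.Eventually.of_forall fun x => Real.sqrt_nonneg _
  have hgg0 : (0:ℝ→ℝ) ≤ᵐ[μ] g := Filter.Eventually.of_forall fun x => Real.sqrt_nonneg _
  have holder := integral_mul_le_Lp_mul_Lq_of_nonneg h2 hfg0 hgg0 (memL2 n) (memL2 (n + 2))
  -- identify ∫ f^2 and ∫ g^2 with cauchy2 n and cauchy2 (n+2)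
  have sqeq : ∀ k, (∫ x, (Real.sqrt (∏ i ∈ Finset.range k, (x + i))) ^ (2:ℝ) ∂μ)
      = cauchy2 k := by
    intro k
    rw [hconv]
    refine setIntegral_congr_fun measurableSet_Ioc fun x hx => ?_
    have hx0 : (0:ℝ) ≤ x := hx.1.le
    rw [Real.rpow_two, Real.sq_sqrt (P_nonneg k hx0)]
  rw [hf, hg] at holder
  simp only [sqeq] at holder
  have hc : ∀ k, 0 ≤ cauchy2 k := by
    intro k
    rw [hconv]
    exact setIntegral_nonneg measurableSet_Ioc fun x hx => P_nonneg k hx.1.le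
  have hc1 : 0 ≤ cauchy2 (n + 1) := hc (n + 1)
  have key : cauchy2 (n + 1) ≤ (cauchy2 n) ^ ((1:ℝ)/2) * (cauchy2 (n + 2)) ^ ((1:ℝ)/2) :=
    le_trans step1 holder
  have hr : ((cauchy2 n) ^ ((1:ℝ)/2) * (cauchy2 (n + 2)) ^ ((1:ℝ)/2)) ^ 2 =
      cauchy2 n * cauchy2 (n + 2) := by
    rw [mul_pow, ← Real.rpow_natCast ((cauchy2 n) ^ ((1:ℝ)/2)) 2,
      ← Real.rpow_natCast ((cauchy2 (n + 2)) ^ ((1:ℝ)/2)) 2,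
      ← Real.rpow_mul (hc n), ← Real.rpow_mul (hc (n + 2))]
    norm_num
  calc cauchy2 (n + 1) ^ 2
      ≤ ((cauchy2 n) ^ ((1:ℝ)/2) * (cauchy2 (n + 2)) ^ ((1:ℝ)/2)) ^ 2 := by
        exact pow_le_pow_left₀ hc1 key 2
    _ = cauchy2 n * cauchy2 (n + 2) := hr
end

section
/- For all positive integers n, m and every integer ℓ ≥ 0, the quantity H = c_{ℓ+n+2m}(c_ℓ)² − 2 c_{ℓ+n+m} c_{ℓ+m} c_ℓ + c_{ℓ+n} (c_{ℓ+m})² is nonnegative. -/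
open MeasureTheory Real Nat

lemma contP (k : ℕ) : Continuous fun x : ℝ => ∏ i ∈ Finset.range k, (x + i) := by
  exact continuous_finset_prod _ fun i _ => by continuity

lemma cauchy2_pos (k : ℕ) : 0 < cauchy2 k := by
  apply intervalIntegral.intervalIntegral_pos_of_pos_on
    ((contP k).intervalIntegrable 0 1)
  · intro x hx
    exact Finset.prod_pos fun i _ => by have := hx.1; positivity
  · norm_num

lemma cauchy2_key (k m : ℕ) : cauchy2 (k + m) ^ 2 ≤ cauchy2 (k + 2 * m) * cauchy2 k := by
  set P := fun x : ℝ => ∏ i ∈ Finset.range k, (x + (i:ℝ)) with hP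
  set Q := fun x : ℝ => ∏ i ∈ Finset.range m, (x + ((k + i : ℕ):ℝ)) with hQ
  set R := fun x : ℝ => ∏ i ∈ Finset.range m, (x + ((k + m + i : ℕ):ℝ)) with hR
  have hPc : Continuous P := contP k
  have hQc : Continuous Q := continuous_finset_prod _ fun i _ => by continuity
  have hRc : Continuous R := continuous_finset_prod _ fun i _ => by continuity
  have hPQ : ∀ x : ℝ, (∏ i ∈ Finset.range (k + m), (x + (i:ℝ))) = P x * Q x := by
    intro x; rw [Finset.prod_range_add]
  have hPQR : ∀ x : ℝ, (∏ i ∈ Finset.range (k + 2 * m), (x + (i:ℝ))) = P x * Q x * R x := by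
    intro x
    have h2 : k + 2 * m = (k + m) + m := by ring
    rw [h2, Finset.prod_range_add, hPQ]
  have hPnn : ∀ x : ℝ, 0 ≤ x → 0 ≤ P x :=
    fun x hx => Finset.prod_nonneg fun i _ => add_nonneg hx (Nat.cast_nonneg _)
  have hQnn : ∀ x : ℝ, 0 ≤ x → 0 ≤ Q x :=
    fun x hx => Finset.prod_nonneg fun i _ => add_nonneg hx (Nat.cast_nonneg _)
  have hQR : ∀ x : ℝ, 0 ≤ x → Q x ≤ R x := by
    intro x hx
    apply Finset.prod_le_prod (fun i _ => add_nonneg hx (Nat.cast_nonneg _))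
    intro i _
    have : (k + i : ℕ) ≤ (k + m + i : ℕ) := by omega
    exact add_le_add (le_refl x) (Nat.cast_le.mpr this)
  set B := cauchy2 (k + m) with hB
  set C := cauchy2 k with hCdef
  have hC : 0 < C := cauchy2_pos k
  set t := B / C with ht
  -- nonnegativity of ∫ P (Q - t)^2
  have h0 : 0 ≤ ∫ x in (0:ℝ)..1, P x * (Q x - t) ^ 2 := by
    apply intervalIntegral.integral_nonneg (by norm_num)
    intro x hx
    exact mul_nonneg (hPnn x hx.1) (sq_nonneg _)
  -- expansion
  have hBint : B = ∫ x in (0:ℝ)..1, P x * Q x := by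
    rw [hB]; unfold cauchy2; exact intervalIntegral.integral_congr fun x _ => hPQ x
  have hexp : (∫ x in (0:ℝ)..1, P x * (Q x - t) ^ 2)
      = (∫ x in (0:ℝ)..1, P x * Q x ^ 2) - 2 * t * B + t ^ 2 * C := by
    have heq : ∀ x : ℝ, P x * (Q x - t) ^ 2
        = P x * Q x ^ 2 - 2 * t * (P x * Q x) + t ^ 2 * P x := by intro x; ring
    rw [intervalIntegral.integral_congr (g := fun x => P x * Q x ^ 2 - 2 * t * (P x * Q x) + t ^ 2 * P x) (fun x _ => heq x)]
    rw [intervalIntegral.integral_add (f := fun x => P x * Q x ^ 2 - 2 * t * (P x * Q x)) (g := fun x => t ^ 2 * P x)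
        (((hPc.mul (hQc.pow 2)).sub (continuous_const.mul (hPc.mul hQc))).intervalIntegrable 0 1)
        ((continuous_const.mul hPc).intervalIntegrable 0 1),
      intervalIntegral.integral_sub (f := fun x => P x * Q x ^ 2) (g := fun x => 2 * t * (P x * Q x)) ((hPc.mul (hQc.pow 2)).intervalIntegrable 0 1)
        ((continuous_const.mul (hPc.mul hQc)).intervalIntegrable 0 1),
      intervalIntegral.integral_const_mul, intervalIntegral.integral_const_mul, ← hBint]
    rfl
  have hmono : (∫ x in (0:ℝ)..1, P x * Q x ^ 2) ≤ cauchy2 (k + 2 * m) := by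
    unfold cauchy2
    rw [intervalIntegral.integral_congr (g := fun x => P x * Q x * R x) (fun x _ => hPQR x)]
    apply intervalIntegral.integral_mono_on (by norm_num)
      ((hPc.mul (hQc.pow 2)).intervalIntegrable 0 1)
      ((hPc.mul hQc |>.mul hRc).intervalIntegrable 0 1)
    intro x hx
    have h1 : P x * Q x ^ 2 = (P x * Q x) * Q x := by ring
    show P x * Q x ^ 2 ≤ P x * Q x * R x
    rw [h1]
    exact mul_le_mul_of_nonneg_left (hQR x hx.1) (mul_nonneg (hPnn x hx.1) (hQnn x hx.1))
  have hfin : 0 ≤ cauchy2 (k + 2 * m) - 2 * t * B + t ^ 2 * C := by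
    have := h0.trans_eq hexp
    nlinarith [hmono]
  rw [ht] at hfin
  have hC' : C ≠ 0 := ne_of_gt hC
  have h2 : 2 * (B / C) * B = 2 * B ^ 2 / C := by field_simp
  have h3 : (B / C) ^ 2 * C = B ^ 2 / C := by field_simp
  rw [h2, h3] at hfin
  have : B ^ 2 / C ≤ cauchy2 (k + 2 * m) := by
    have hh : 2 * B ^ 2 / C = 2 * (B ^ 2 / C) := by ring
    rw [hh] at hfin; linarith
  calc B ^ 2 = B ^ 2 / C * C := by field_simp
  _ ≤ cauchy2 (k + 2 * m) * C := mul_le_mul_of_nonneg_right this hC.le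

theorem cauchy2_H_nonneg (n m l : ℕ) (hn : 0 < n) (hm : 0 < m) :
    0 ≤ cauchy2 (l + n + 2 * m) * cauchy2 l ^ 2
        - 2 * cauchy2 (l + n + m) * cauchy2 (l + m) * cauchy2 l
        + cauchy2 (l + n) * cauchy2 (l + m) ^ 2 := by
  have hkey : cauchy2 (l + n + m) ^ 2 ≤ cauchy2 (l + n + 2 * m) * cauchy2 (l + n) := by
    have := cauchy2_key (l + n) m
    convert this using 3 <;> ring
  have hA := cauchy2_pos (l + n + 2 * m)
  have hB := cauchy2_pos (l + n + m)
  have hCC := cauchy2_pos (l + n)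
  have ha := cauchy2_pos l
  have hb := cauchy2_pos (l + m)
  nlinarith [sq_nonneg (cauchy2 (l + n + 2 * m) * cauchy2 l - cauchy2 (l + n + m) * cauchy2 (l + m)),
    mul_pos ha ha, mul_pos hb hb, sq_nonneg (cauchy2 (l + m)), mul_pos hA hCC]
end

section
/- Let m ≥ 1 and let a_0, a_1, …, a_m be nonnegative integers. Then (c_{a_0}/a_0!)^{m−1} · c_{a_0+a_1+⋯+a_m}/(a_0+a_1+⋯+a_m)! ≥ ∏_{k=1}^m c_{a_0+a_k}/(a_0+a_k)!. -/
open MeasureTheory Real Nat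

namespace Cauchy2Aux

/-- truncated Pochhammer-type product, monotone and nonneg on all of ℝ -/
noncomputable def P (A n : ℕ) (x : ℝ) : ℝ := ∏ j ∈ Finset.range n, (max x 0 + (A + j : ℕ))

lemma contP (A n : ℕ) : Continuous (P A n) := by
  unfold P
  exact continuous_finset_prod _ fun i _ => by fun_prop

lemma P_nonneg (A n : ℕ) (x : ℝ) : 0 ≤ P A n x :=
  Finset.prod_nonneg fun i _ => by positivity

lemma P_mono (A n : ℕ) : Monotone (P A n) := by
  intro x y hxy
  apply Finset.prod_le_prod (fun i _ => by positivity)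
  intro i _
  have : max x 0 ≤ max y 0 := max_le_max hxy le_rfl
  linarith

lemma P_add (A b c : ℕ) (x : ℝ) : P A (b + c) x = P A b x * P (A + b) c x := by
  unfold P
  rw [Finset.prod_range_add]
  congr 1
  apply Finset.prod_congr rfl
  intro j _
  push_cast
  ring

lemma P0_add (n m : ℕ) (x : ℝ) : P 0 (n + m) x = P 0 n x * P n m x := by
  have := P_add 0 n m x
  simpa using this

lemma cauchy2_eq (n : ℕ) : cauchy2 n = ∫ x in Set.Ioc (0:ℝ) 1, P 0 n x := by
  rw [cauchy2, intervalIntegral.integral_of_le zero_le_one]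
  apply setIntegral_congr_fun measurableSet_Ioc
  intro x hx
  unfold P
  apply Finset.prod_congr rfl
  intro j _
  rw [max_eq_left hx.1.le]
  push_cast
  ring

lemma cauchy2_nonneg (n : ℕ) : 0 ≤ cauchy2 n := by
  rw [cauchy2_eq]
  exact setIntegral_nonneg measurableSet_Ioc fun x _ => P_nonneg 0 n x

lemma chebyshev (w g h : ℝ → ℝ) (hw : Continuous w) (hg : Continuous g) (hh : Continuous h)
    (hw0 : ∀ x, 0 ≤ w x) (hgm : Monotone g) (hhm : Monotone h) :
    (∫ x in Set.Ioc (0:ℝ) 1, w x * g x) * (∫ x in Set.Ioc (0:ℝ) 1, w x * h x)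
      ≤ (∫ x in Set.Ioc (0:ℝ) 1, w x) * (∫ x in Set.Ioc (0:ℝ) 1, w x * (g x * h x)) := by
  set μ := volume.restrict (Set.Ioc (0:ℝ) 1) with hμ
  have hint : ∀ f : ℝ → ℝ, Continuous f → Integrable f μ := fun f hf => hf.integrableOn_Ioc
  have i1 : Integrable w μ := hint w hw
  have i2 : Integrable (fun x => w x * g x) μ := hint _ (hw.mul hg)
  have i3 : Integrable (fun x => w x * h x) μ := hint _ (hw.mul hh)
  have i4 : Integrable (fun x => w x * (g x * h x)) μ := hint _ (hw.mul (hg.mul hh))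
  have key : 0 ≤ ∫ p : ℝ × ℝ, w p.1 * w p.2 * ((g p.1 - g p.2) * (h p.1 - h p.2)) ∂(μ.prod μ) := by
    apply integral_nonneg
    intro p
    apply mul_nonneg (mul_nonneg (hw0 _) (hw0 _))
    rcases le_total p.1 p.2 with hle | hle
    · nlinarith [hgm hle, hhm hle]
    · nlinarith [hgm hle, hhm hle]
  have expand : ∫ p : ℝ × ℝ, w p.1 * w p.2 * ((g p.1 - g p.2) * (h p.1 - h p.2)) ∂(μ.prod μ)
      = (∫ x, w x * (g x * h x) ∂μ) * (∫ x, w x ∂μ)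
        + (∫ x, w x ∂μ) * (∫ x, w x * (g x * h x) ∂μ)
        - ((∫ x, w x * g x ∂μ) * (∫ x, w x * h x ∂μ)
          + (∫ x, w x * h x ∂μ) * (∫ x, w x * g x ∂μ)) := by
    have e1 : (fun p : ℝ × ℝ => w p.1 * w p.2 * ((g p.1 - g p.2) * (h p.1 - h p.2)))
        = fun p : ℝ × ℝ => ((fun x => w x * (g x * h x)) p.1 * w p.2
            + w p.1 * ((fun x => w x * (g x * h x)) p.2))
          - ((fun x => w x * g x) p.1 * ((fun x => w x * h x) p.2)
            + (fun x => w x * h x) p.1 * ((fun x => w x * g x) p.2)) := by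
      funext p; ring
    have A1 := integral_prod_mul (μ := μ) (ν := μ) (fun x => w x * (g x * h x)) w
    have A2 := integral_prod_mul (μ := μ) (ν := μ) w (fun x => w x * (g x * h x))
    have A3 := integral_prod_mul (μ := μ) (ν := μ) (fun x => w x * g x) (fun x => w x * h x)
    have A4 := integral_prod_mul (μ := μ) (ν := μ) (fun x => w x * h x) (fun x => w x * g x)
    rw [e1, integral_sub, integral_add, integral_add, A1, A2, A3, A4]
    all_goals first
      | exact i4.mul_prod i1
      | exact i1.mul_prod i4
      | exact i2.mul_prod i3
      | exact i3.mul_prod i2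
      | exact (i4.mul_prod i1).add (i1.mul_prod i4)
      | exact (i2.mul_prod i3).add (i3.mul_prod i2)
  rw [expand] at key
  nlinarith [key]

lemma fact_add (A c : ℕ) : (A + c)! = A ! * ∏ j ∈ Finset.range c, (A + j + 1) := by
  induction c with
  | zero => simp
  | succ n ih =>
    rw [Finset.prod_range_succ, ← mul_assoc, ← ih, ← Nat.add_assoc, Nat.factorial_succ,
      Nat.mul_comm]

/-- the termwise real product comparison -/
lemma prod_cmp (A b c : ℕ) (y : ℝ) (hy0 : 0 ≤ y) (hy1 : y ≤ 1) :
    (∏ j ∈ Finset.range c, (y + (A + j : ℕ))) * (∏ j ∈ Finset.range c, ((A + b + j + 1 : ℕ) : ℝ))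
      ≤ (∏ j ∈ Finset.range c, (y + (A + b + j : ℕ)))
        * (∏ j ∈ Finset.range c, ((A + j + 1 : ℕ) : ℝ)) := by
  rw [← Finset.prod_mul_distrib, ← Finset.prod_mul_distrib]
  apply Finset.prod_le_prod
  · intro j _; positivity
  · intro j _
    push_cast
    nlinarith [Nat.cast_nonneg (α := ℝ) b, Nat.cast_nonneg (α := ℝ) A, Nat.cast_nonneg (α := ℝ) j]

lemma pt (A b c : ℕ) (x : ℝ) (hx : x ∈ Set.Ioc (0:ℝ) 1) :
    ((A ! : ℝ) * ((A + b + c)! : ℝ)) * (P 0 A x * (P A b x * P A c x))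
      ≤ (((A + b)! : ℝ) * ((A + c)! : ℝ)) * P 0 (A + b + c) x := by
  have hy0 : (0:ℝ) ≤ max x 0 := le_max_right _ _
  have hy1 : max x 0 ≤ 1 := max_le hx.2 zero_le_one
  have hp := prod_cmp A b c (max x 0) hy0 hy1
  have hC : 0 ≤ (A ! : ℝ) * ((A + b)! : ℝ) * (P 0 A x * P A b x) :=
    mul_nonneg (by positivity) (mul_nonneg (P_nonneg _ _ _) (P_nonneg _ _ _))
  have hsplit : P 0 (A + b + c) x = P 0 A x * P A b x * P (A + b) c x := by
    rw [P0_add (A + b) c, P0_add A b]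
  have hf1 : ((A + b + c)! : ℝ)
      = ((A + b)! : ℝ) * ∏ j ∈ Finset.range c, ((A + b + j + 1 : ℕ) : ℝ) := by
    rw [fact_add (A + b) c]; push_cast; ring
  have hf2 : ((A + c)! : ℝ) = (A ! : ℝ) * ∏ j ∈ Finset.range c, ((A + j + 1 : ℕ) : ℝ) := by
    rw [fact_add A c]; push_cast; ring
  have hPc : P A c x = ∏ j ∈ Finset.range c, (max x 0 + (A + j : ℕ)) := rfl
  have hPbc : P (A + b) c x = ∏ j ∈ Finset.range c, (max x 0 + (A + b + j : ℕ)) := rfl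
  rw [hsplit, hf1, hf2, hPc, hPbc]
  have h2 := mul_le_mul_of_nonneg_left hp hC
  nlinarith [h2]

lemma key (A b c : ℕ) :
    cauchy2 (A + b) / ((A + b)! : ℝ) * (cauchy2 (A + c) / ((A + c)! : ℝ))
      ≤ cauchy2 A / (A ! : ℝ) * (cauchy2 (A + b + c) / ((A + b + c)! : ℝ)) := by
  have hcheb := chebyshev (P 0 A) (P A b) (P A c) (contP 0 A) (contP A b) (contP A c)
    (P_nonneg 0 A) (P_mono A b) (P_mono A c)
  have eb : (∫ x in Set.Ioc (0:ℝ) 1, P 0 A x * P A b x) = cauchy2 (A + b) := by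
    rw [cauchy2_eq]
    exact setIntegral_congr_fun measurableSet_Ioc fun x _ => (P0_add A b x).symm
  have ec : (∫ x in Set.Ioc (0:ℝ) 1, P 0 A x * P A c x) = cauchy2 (A + c) := by
    rw [cauchy2_eq]
    exact setIntegral_congr_fun measurableSet_Ioc fun x _ => (P0_add A c x).symm
  rw [eb, ec, ← cauchy2_eq] at hcheb
  -- bound the mixed integral
  have hmono : ((A ! : ℝ) * ((A + b + c)! : ℝ))
        * (∫ x in Set.Ioc (0:ℝ) 1, P 0 A x * (P A b x * P A c x))
      ≤ (((A + b)! : ℝ) * ((A + c)! : ℝ)) * cauchy2 (A + b + c) := by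
    rw [cauchy2_eq, ← integral_const_mul, ← integral_const_mul]
    apply setIntegral_mono_on
    · exact (continuous_const.mul ((contP 0 A).mul ((contP A b).mul (contP A c)))).integrableOn_Ioc
    · exact (continuous_const.mul (contP 0 (A + b + c))).integrableOn_Ioc
    · exact measurableSet_Ioc
    · exact fun x hx => pt A b c x hx
  have h0 : 0 ≤ cauchy2 A := cauchy2_nonneg A
  have hK1 : (0:ℝ) < (A ! : ℝ) * ((A + b + c)! : ℝ) := by positivity
  rw [_root_.div_mul_div_comm, _root_.div_mul_div_comm, div_le_div_iff₀ (by positivity) (by positivity)]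
  have step1 := mul_le_mul_of_nonneg_right hcheb hK1.le
  have step2 := mul_le_mul_of_nonneg_left hmono h0
  nlinarith [step1, step2]

lemma main_aux (m : ℕ) (hm : 1 ≤ m) (a : ℕ → ℕ) :
    ∏ k ∈ Finset.Icc 1 m, cauchy2 (a 0 + a k) / ((a 0 + a k)! : ℝ)
      ≤ (cauchy2 (a 0) / ((a 0)! : ℝ)) ^ (m - 1) *
        (cauchy2 (a 0 + ∑ k ∈ Finset.Icc 1 m, a k)
          / ((a 0 + ∑ k ∈ Finset.Icc 1 m, a k)! : ℝ)) := by
  induction m, hm using Nat.le_induction with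
  | base => simp [Finset.Icc_self]
  | succ n hn ih =>
    rw [Finset.prod_Icc_succ_top (by omega), Finset.sum_Icc_succ_top (by omega)]
    have hfnn : (0:ℝ) ≤ cauchy2 (a 0 + a (n + 1)) / ((a 0 + a (n + 1))! : ℝ) := by
      have := cauchy2_nonneg (a 0 + a (n + 1))
      positivity
    have step := mul_le_mul_of_nonneg_right ih hfnn
    have hkey := key (a 0) (∑ k ∈ Finset.Icc 1 n, a k) (a (n + 1))
    have hpow : (0:ℝ) ≤ (cauchy2 (a 0) / ((a 0)! : ℝ)) ^ (n - 1) := by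
      have := cauchy2_nonneg (a 0)
      positivity
    have step2 := mul_le_mul_of_nonneg_left hkey hpow
    calc (∏ k ∈ Finset.Icc 1 n, cauchy2 (a 0 + a k) / ((a 0 + a k)! : ℝ))
          * (cauchy2 (a 0 + a (n + 1)) / ((a 0 + a (n + 1))! : ℝ))
        ≤ (cauchy2 (a 0) / ((a 0)! : ℝ)) ^ (n - 1)
            * (cauchy2 (a 0 + ∑ k ∈ Finset.Icc 1 n, a k)
              / ((a 0 + ∑ k ∈ Finset.Icc 1 n, a k)! : ℝ))
            * (cauchy2 (a 0 + a (n + 1)) / ((a 0 + a (n + 1))! : ℝ)) := step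
      _ ≤ (cauchy2 (a 0) / ((a 0)! : ℝ)) ^ (n - 1)
            * (cauchy2 (a 0) / ((a 0)! : ℝ)
              * (cauchy2 (a 0 + ∑ k ∈ Finset.Icc 1 n, a k + a (n + 1))
                / ((a 0 + ∑ k ∈ Finset.Icc 1 n, a k + a (n + 1))! : ℝ))) := by
          rw [mul_assoc]; exact step2
      _ = (cauchy2 (a 0) / ((a 0)! : ℝ)) ^ (n + 1 - 1)
            * (cauchy2 (a 0 + (∑ k ∈ Finset.Icc 1 n, a k + a (n + 1)))
              / ((a 0 + (∑ k ∈ Finset.Icc 1 n, a k + a (n + 1)))! : ℝ)) := by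
          rw [← add_assoc]
          have : n + 1 - 1 = (n - 1) + 1 := by omega
          rw [this, pow_succ]
          ring

end Cauchy2Aux

theorem cauchy2_product_lower_bound (m : ℕ) (hm : 1 ≤ m) (a : ℕ → ℕ) :
    ∏ k ∈ Finset.Icc 1 m, cauchy2 (a 0 + a k) / ((a 0 + a k)! : ℝ)
      ≤ (cauchy2 (a 0) / ((a 0)! : ℝ)) ^ (m - 1) *
        (cauchy2 (∑ k ∈ Finset.range (m + 1), a k)
          / ((∑ k ∈ Finset.range (m + 1), a k)! : ℝ)) := by
  have hsum : ∑ k ∈ Finset.range (m + 1), a k = a 0 + ∑ k ∈ Finset.Icc 1 m, a k := by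
    rw [Finset.sum_range_succ', ← Finset.Ico_add_one_right_eq_Icc, Finset.sum_Ico_eq_sum_range]
    simp only [Nat.add_sub_cancel]
    rw [add_comm]
    congr 1
    exact Finset.sum_congr rfl fun j _ => by rw [add_comm]
  rw [hsum]
  exact Cauchy2Aux.main_aux m hm a
end
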